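/- Under the unassuming condition, the confident-counts estimator satisfies ρ̂₁^{conf} = ρ₁ + (1-ρ₁-ρ₀)·|ΔN₁|/(|P| - |ΔP₁| + |ΔN₁|), where ΔP₁ = {x∈P : g(x) < LB} and ΔN₁ = {x∈N : g(x) ≥ LB}; consequently ρ̂₁^{conf} ≥ ρ₁, with equality iff |ΔN₁| = 0. -/

import Mathlib

open MeasureTheory Set

noncomputable def Pr {Ω : Type*} [MeasurableSpace Ω] (μ : Measure Ω) (A : Set Ω) : ℝ :=
  (μ A).toReal

/-- Lemma 3, ρ̂₁ part: Under the unassuming condition, with class-conditional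
noise independent of any g-measurable event,
ρ̂₁^{conf} = ρ₁ + (1-ρ₁-ρ₀)·|ΔN₁|/(|P| - |ΔP₁| + |ΔN₁|), where
ΔP₁ = P ∩ {g < LB}, ΔN₁ = N ∩ {g ≥ LB}; hence ρ̂₁^{conf} ≥ ρ₁ with equality iff |ΔN₁| = 0. -/
theorem stmt14 {Ω : Type*} [MeasurableSpace Ω] (μ : Measure Ω) [IsProbabilityMeasure μ]
    (P N S : Set Ω) (hP : MeasurableSet P) (hN : MeasurableSet N) (hS : MeasurableSet S)
    (hdisj : P ∩ N = ∅) (hcover : P ∪ N = Set.univ)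
    (g : Ω → ℝ) (hg : Measurable g) (LB ρ₁ ρ₀ : ℝ)
    (hρ₁0 : 0 ≤ ρ₁) (hρ₀0 : 0 ≤ ρ₀) (hsum : ρ₁ + ρ₀ < 1)
    -- class-conditional noise, independent of x given the class (applied to g-events):
    (hnoiseP : ∀ B : Set ℝ, MeasurableSet B →
      Pr μ (Sᶜ ∩ (P ∩ g ⁻¹' B)) = ρ₁ * Pr μ (P ∩ g ⁻¹' B))
    (hnoiseN : ∀ B : Set ℝ, MeasurableSet B →
      Pr μ (Sᶜ ∩ (N ∩ g ⁻¹' B)) = (1 - ρ₀) * Pr μ (N ∩ g ⁻¹' B))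
    (hden : 0 < Pr μ P - Pr μ (P ∩ {x | g x < LB}) + Pr μ (N ∩ {x | LB ≤ g x})) :
    Pr μ (Sᶜ ∩ {x | LB ≤ g x}) / (Pr μ (Sᶜ ∩ {x | LB ≤ g x}) + Pr μ (S ∩ {x | LB ≤ g x})) =
      ρ₁ + (1 - ρ₁ - ρ₀) * Pr μ (N ∩ {x | LB ≤ g x}) /
        (Pr μ P - Pr μ (P ∩ {x | g x < LB}) + Pr μ (N ∩ {x | LB ≤ g x})) ∧
    ρ₁ ≤ Pr μ (Sᶜ ∩ {x | LB ≤ g x}) /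
        (Pr μ (Sᶜ ∩ {x | LB ≤ g x}) + Pr μ (S ∩ {x | LB ≤ g x})) ∧
    (Pr μ (Sᶜ ∩ {x | LB ≤ g x}) / (Pr μ (Sᶜ ∩ {x | LB ≤ g x}) + Pr μ (S ∩ {x | LB ≤ g x}))
        = ρ₁ ↔ Pr μ (N ∩ {x | LB ≤ g x}) = 0) := by
  classical
  have hPr_nonneg : ∀ A : Set Ω, 0 ≤ Pr μ A := fun A => ENNReal.toReal_nonneg
  have hPr_add : ∀ A B : Set Ω, MeasurableSet B → A ∩ B = ∅ →
      Pr μ (A ∪ B) = Pr μ A + Pr μ B := by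
    intro A B hB h
    unfold Pr
    rw [measure_union (Set.disjoint_iff_inter_eq_empty.mpr h) hB,
      ENNReal.toReal_add (measure_ne_top μ A) (measure_ne_top μ B)]
  set G : Set Ω := {x | LB ≤ g x} with hGdef
  have hGm : MeasurableSet G := hg measurableSet_Ici
  have hGpre : G = g ⁻¹' Set.Ici LB := rfl
  have hLpre : {x | g x < LB} = g ⁻¹' Set.Iio LB := rfl
  set a := Pr μ (P ∩ G) with ha
  set b := Pr μ (N ∩ G) with hb
  have ha0 : 0 ≤ a := hPr_nonneg _
  have hb0 : 0 ≤ b := hPr_nonneg _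
  -- numerator
  have hnum : Pr μ (Sᶜ ∩ G) = ρ₁ * a + (1 - ρ₀) * b := by
    have hsplit : Sᶜ ∩ G = (Sᶜ ∩ (P ∩ G)) ∪ (Sᶜ ∩ (N ∩ G)) := by
      ext x
      have hx : x ∈ P ∪ N := hcover ▸ Set.mem_univ x
      simp only [Set.mem_inter_iff, Set.mem_union] at *
      tauto
    have hd : (Sᶜ ∩ (P ∩ G)) ∩ (Sᶜ ∩ (N ∩ G)) = ∅ := by
      apply Set.eq_empty_iff_forall_notMem.mpr
      intro x hx
      have : x ∈ P ∩ N := ⟨hx.1.2.1, hx.2.2.1⟩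
      rw [hdisj] at this; exact this
    rw [hsplit, hPr_add _ _ (hS.compl.inter (hN.inter hGm)) hd, ha, hb, hGpre,
      hnoiseP _ measurableSet_Ici, hnoiseN _ measurableSet_Ici]
  -- total
  have htot : Pr μ (Sᶜ ∩ G) + Pr μ (S ∩ G) = a + b := by
    have h1 : (Sᶜ ∩ G) ∪ (S ∩ G) = G := by
      ext x; simp only [Set.mem_union, Set.mem_inter_iff, Set.mem_compl_iff]; tauto
    have hd1 : (Sᶜ ∩ G) ∩ (S ∩ G) = ∅ := by
      apply Set.eq_empty_iff_forall_notMem.mpr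
      intro x hx; exact hx.1.1 hx.2.1
    have h2 : (P ∩ G) ∪ (N ∩ G) = G := by
      ext x
      have hx : x ∈ P ∪ N := hcover ▸ Set.mem_univ x
      simp only [Set.mem_union, Set.mem_inter_iff] at *
      tauto
    have hd2 : (P ∩ G) ∩ (N ∩ G) = ∅ := by
      apply Set.eq_empty_iff_forall_notMem.mpr
      intro x hx
      have : x ∈ P ∩ N := ⟨hx.1.1, hx.2.1⟩
      rw [hdisj] at this; exact this
    rw [← hPr_add _ _ (hS.inter hGm) hd1, h1,
      ← hPr_add _ _ (hN.inter hGm) hd2, h2]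
  -- denominator identity
  have hPa : Pr μ P - Pr μ (P ∩ {x | g x < LB}) = a := by
    have hsplit : (P ∩ {x | g x < LB}) ∪ (P ∩ G) = P := by
      ext x
      simp only [Set.mem_union, Set.mem_inter_iff, Set.mem_setOf_eq]
      constructor
      · rintro (⟨h, _⟩ | ⟨h, _⟩) <;> exact h
      · intro h
        rcases lt_or_ge (g x) LB with h' | h'
        · exact Or.inl ⟨h, h'⟩
        · exact Or.inr ⟨h, h'⟩
    have hd : (P ∩ {x | g x < LB}) ∩ (P ∩ G) = ∅ := by
      apply Set.eq_empty_iff_forall_notMem.mpr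
      intro x hx
      have h1 : g x < LB := hx.1.2
      have h2 : LB ≤ g x := hx.2.2
      linarith
    have := hPr_add _ _ (hP.inter hGm) hd
    rw [hsplit] at this
    rw [this]; ring
  rw [hPa] at hden
  have hA : 0 < a + b := hden
  have hAne : a + b ≠ 0 := ne_of_gt hA
  have hkey : Pr μ (Sᶜ ∩ G) / (Pr μ (Sᶜ ∩ G) + Pr μ (S ∩ G)) =
      ρ₁ + (1 - ρ₁ - ρ₀) * b / (a + b) := by
    rw [htot, hnum]
    field_simp
    ring
  refine ⟨by rw [hkey, hPa], ?_, ?_⟩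
  · rw [hkey]
    have : 0 ≤ (1 - ρ₁ - ρ₀) * b / (a + b) :=
      div_nonneg (mul_nonneg (by linarith) hb0) (le_of_lt hA)
    linarith
  · rw [hkey]
    constructor
    · intro h
      have h2 : (1 - ρ₁ - ρ₀) * b / (a + b) = 0 := by linarith
      rcases mul_eq_zero.mp (by
        field_simp at h2
        exact h2.trans (mul_zero _)) with h3 | h3
      · linarith
      · exact h3
    · intro h
      rw [h]; simp
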